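/- arXiv:math/9810007 — 2 statements merged into one kernel-verified Lean document; each statement's English description precedes it below -/
import Mathlib

section
/- Let n ≥ 1. The group G_n is isomorphic (as a group) to the direct product ℤ × ℤ/nℤ. -/
/-- The relators of the presentation of `G_n = π₁(B_n)`: generators
`a₁ = 0`, `b₁ = 1`, `a₂ = 2`, `b₂ = 3`. -/
def gnRels (n : ℕ) : Set (FreeGroup (Fin 4)) :=
  letI a₁ := FreeGroup.of (0 : Fin 4)
  letI b₁ := FreeGroup.of (1 : Fin 4)
  letI a₂ := FreeGroup.of (2 : Fin 4)
  letI b₂ := FreeGroup.of (3 : Fin 4)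
  { (a₁ * b₁ * a₁⁻¹ * b₁⁻¹) * (a₂ * b₂ * a₂⁻¹ * b₂⁻¹),
    b₁ * b₂,
    a₁ * b₁ * a₁⁻¹ * b₁⁻¹,
    a₂ * b₂ * a₂⁻¹ * b₂⁻¹,
    b₂ * a₂ * b₂⁻¹ * a₁,
    b₂ * a₂ * a₁ * b₁,
    b₁ * b₂ * a₂ ^ n,
    b₂ * a₂ ^ (n + 1) * a₁ * b₁ }

theorem Gn_iso_int_prod_zmod (n : ℕ) (hn : 1 ≤ n) :
    Nonempty (PresentedGroup (gnRels n) ≃* Multiplicative (ℤ × ZMod n)) := by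
  haveI : NeZero n := ⟨by omega⟩
  set G := PresentedGroup (gnRels n) with hG
  -- names for the generators in G
  set a1 : G := PresentedGroup.of 0 with ha1def
  set b1 : G := PresentedGroup.of 1 with hb1def
  set a2 : G := PresentedGroup.of 2 with ha2def
  set b2 : G := PresentedGroup.of 3 with hb2def
  -- each relator maps to 1
  have hrel : ∀ r ∈ gnRels n, (QuotientGroup.mk r : G) = 1 := fun r hr =>
    (QuotientGroup.eq_one_iff r).mpr (Subgroup.subset_normalClosure hr)
  have r2 : b1 * b2 = 1 := by
    have := hrel (FreeGroup.of (1 : Fin 4) * FreeGroup.of (3 : Fin 4))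
      (by simp [gnRels])
    exact this
  have r5 : b2 * a2 * b2⁻¹ * a1 = 1 := by
    have := hrel (FreeGroup.of (3 : Fin 4) * FreeGroup.of (2 : Fin 4) *
      (FreeGroup.of (3 : Fin 4))⁻¹ * FreeGroup.of (0 : Fin 4)) (by simp [gnRels])
    exact this
  have r6 : b2 * a2 * a1 * b1 = 1 := by
    have := hrel (FreeGroup.of (3 : Fin 4) * FreeGroup.of (2 : Fin 4) *
      FreeGroup.of (0 : Fin 4) * FreeGroup.of (1 : Fin 4)) (by simp [gnRels])
    exact this
  have r7 : b1 * b2 * a2 ^ n = 1 := by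
    have := hrel (FreeGroup.of (1 : Fin 4) * FreeGroup.of (3 : Fin 4) *
      FreeGroup.of (2 : Fin 4) ^ n) (by simp [gnRels])
    exact this
  -- derived relations
  have hb2 : b2 = b1⁻¹ := (inv_eq_of_mul_eq_one_right r2).symm
  have hA : a2 ^ n = 1 := by rwa [r2, one_mul] at r7
  have ha1 : a1 = a2⁻¹ := by
    rw [hb2] at r6
    have h : a2 * a1 = 1 := by
      have := congrArg (fun x => b1 * x * b1⁻¹) r6
      simpa [mul_assoc] using this
    exact eq_inv_of_mul_eq_one_right h
  have hcomm : Commute a2 b1 := by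
    rw [hb2, ha1] at r5
    have h : b1⁻¹ * a2 * b1 = a2 := by
      rwa [mul_inv_eq_one] at r5
    have hx : a2 * b1 = b1 * a2 := by
      have := congrArg (fun x => b1 * x) h
      simpa [mul_assoc] using this
    exact hx
  -- the map G → Multiplicative (ℤ × ZMod n)
  let f : Fin 4 → Multiplicative (ℤ × ZMod n) := fun i =>
    Multiplicative.ofAdd (![((0 : ℤ), (-1 : ZMod n)), (1, 0), (0, 1), (-1, 0)] i)
  have hf : ∀ r ∈ gnRels n, FreeGroup.lift f r = 1 := by
    intro r hr
    simp only [gnRels, Set.mem_insert_iff, Set.mem_singleton_iff] at hr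
    rcases hr with rfl | rfl | rfl | rfl | rfl | rfl | rfl | rfl <;>
      · simp only [map_mul, map_inv, map_pow, FreeGroup.lift_apply_of, f]
        simp only [← ofAdd_add, ← ofAdd_neg, ← ofAdd_nsmul]
        rw [show (1 : Multiplicative (ℤ × ZMod n)) = Multiplicative.ofAdd 0 from rfl]
        congr 1
        simp [Prod.ext_iff, Matrix.cons_val_zero, Matrix.cons_val_one]
        try simp [ZMod.natCast_self]
        try ring
  let φ : G →* Multiplicative (ℤ × ZMod n) := PresentedGroup.toGroup hf
  have hφ : ∀ i, φ (PresentedGroup.of i) = f i := fun i => PresentedGroup.toGroup.of hf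
  -- the inverse map
  let ψ : Multiplicative (ℤ × ZMod n) →* G :=
    { toFun := fun z => b1 ^ (z.toAdd.1) * a2 ^ ((z.toAdd.2).val)
      map_one' := by simp
      map_mul' := by
        intro x y
        have hcm : Commute (a2 ^ (x.toAdd.2).val) (b1 ^ (y.toAdd.1)) :=
          (hcomm.pow_left _).zpow_right _
        show b1 ^ (x.toAdd.1 + y.toAdd.1) * a2 ^ ((x.toAdd.2 + y.toAdd.2).val) = _
        rw [ZMod.val_add, ← pow_eq_pow_mod _ hA, zpow_add, pow_add]
        exact (hcm.mul_mul_mul_comm _ _).symm }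
  have hψ : ∀ k : ℤ, ∀ y : ZMod n, ψ (Multiplicative.ofAdd (k, y)) = b1 ^ k * a2 ^ y.val :=
    fun k y => rfl
  -- auxiliary power facts
  have hpow1 : a2 ^ ((1 : ZMod n).val) = a2 := by
    rw [ZMod.val_one_eq_one_mod, ← pow_eq_pow_mod _ hA, pow_one]
  have hvalneg : ((-1 : ZMod n)).val = n - 1 := by
    cases n with
    | zero => omega
    | succ m => simpa using ZMod.val_neg_one m
  have hpowneg : a2 ^ ((-1 : ZMod n).val) = a2⁻¹ := by
    rw [hvalneg]
    have h : a2 ^ (n - 1) * a2 = 1 := by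
      rw [← pow_succ, show n - 1 + 1 = n by omega, hA]
    exact eq_inv_of_mul_eq_one_left h
  -- compositions
  have h1 : ψ.comp φ = MonoidHom.id G := by
    apply PresentedGroup.ext
    intro i
    fin_cases i
    · show ψ (φ a1) = a1
      rw [ha1def, hφ]
      show ψ (Multiplicative.ofAdd ((0 : ℤ), (-1 : ZMod n))) = a1
      rw [hψ, zpow_zero, one_mul, hpowneg, ha1]
    · show ψ (φ b1) = b1
      rw [hb1def, hφ]
      show ψ (Multiplicative.ofAdd ((1 : ℤ), (0 : ZMod n))) = b1
      rw [hψ, zpow_one, ZMod.val_zero, pow_zero, mul_one]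
    · show ψ (φ a2) = a2
      rw [ha2def, hφ]
      show ψ (Multiplicative.ofAdd ((0 : ℤ), (1 : ZMod n))) = a2
      rw [hψ, zpow_zero, one_mul, hpow1]
    · show ψ (φ b2) = b2
      rw [hb2def, hφ]
      show ψ (Multiplicative.ofAdd ((-1 : ℤ), (0 : ZMod n))) = b2
      rw [hψ, ZMod.val_zero, pow_zero, mul_one, hb2, zpow_neg_one]
  have h2 : φ.comp ψ = MonoidHom.id (Multiplicative (ℤ × ZMod n)) := by
    apply MonoidHom.ext; intro z
    show φ (b1 ^ (z.toAdd.1) * a2 ^ ((z.toAdd.2).val)) = z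
    rw [map_mul, map_zpow, map_pow, hb1def, ha2def, hφ, hφ]
    show Multiplicative.ofAdd ((1 : ℤ), (0 : ZMod n)) ^ (z.toAdd.1) *
      Multiplicative.ofAdd ((0 : ℤ), (1 : ZMod n)) ^ ((z.toAdd.2).val) = z
    rw [← ofAdd_zsmul, ← ofAdd_nsmul, ← ofAdd_add]
    conv_rhs => rw [← ofAdd_toAdd z]
    congr 1
    rw [Prod.ext_iff]
    constructor
    · simp
    · simpa using ZMod.natCast_rightInverse z.toAdd.2
  exact ⟨MonoidHom.toMulEquiv φ ψ h1 h2⟩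
end

section
/- Let n ≥ 1. The group G_n is isomorphic to the group presented by two generators a, b with relators aba⁻¹b⁻¹ and aⁿ. -/
/-- The relators `a b a⁻¹ b⁻¹` and `aⁿ` on the free group with generators
`a = 0`, `b = 1`. -/
def twoGenRels (n : ℕ) : Set (FreeGroup (Fin 2)) :=
  letI a := FreeGroup.of (0 : Fin 2)
  letI b := FreeGroup.of (1 : Fin 2)
  { a * b * a⁻¹ * b⁻¹, a ^ n }

private lemma mk_rel_one {α : Type*} {rels : Set (FreeGroup α)} {r : FreeGroup α}
    (h : r ∈ rels) : PresentedGroup.mk rels r = 1 :=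
  (QuotientGroup.eq_one_iff _).2 (Subgroup.subset_normalClosure h)

theorem Gn_iso_twoGen (n : ℕ) (hn : 1 ≤ n) :
    Nonempty (PresentedGroup (gnRels n) ≃* PresentedGroup (twoGenRels n)) := by
  set a : PresentedGroup (twoGenRels n) := PresentedGroup.of 0 with ha'
  set b : PresentedGroup (twoGenRels n) := PresentedGroup.of 1 with hb'
  set A₁ : PresentedGroup (gnRels n) := PresentedGroup.of 0 with hA1
  set B₁ : PresentedGroup (gnRels n) := PresentedGroup.of 1 with hB1
  set A₂ : PresentedGroup (gnRels n) := PresentedGroup.of 2 with hA2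
  set B₂ : PresentedGroup (gnRels n) := PresentedGroup.of 3 with hB2
  -- relations in the two-generator group
  have hcomm : a * b * a⁻¹ * b⁻¹ = 1 := by
    have := mk_rel_one (rels := twoGenRels n) (Set.mem_insert _ _)
    simpa [ha', hb', PresentedGroup.of] using this
  have hc2 : Commute a b := by
    have := hcomm
    rw [mul_inv_eq_one, mul_inv_eq_iff_eq_mul] at this
    exact this
  have hapow : a ^ n = 1 := by
    have := mk_rel_one (rels := twoGenRels n) (Set.mem_insert_of_mem _ rfl)
    simpa [ha', PresentedGroup.of] using this
  -- relations in G_n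
  have r2 : B₁ * B₂ = 1 := by
    have := mk_rel_one (rels := gnRels n) (Set.mem_insert_of_mem _ (Set.mem_insert _ _))
    simpa [hB1, hB2, PresentedGroup.of] using this
  have r4 : A₂ * B₂ * A₂⁻¹ * B₂⁻¹ = 1 := by
    have := mk_rel_one (rels := gnRels n)
      (Set.mem_insert_of_mem _ (Set.mem_insert_of_mem _ (Set.mem_insert_of_mem _
        (Set.mem_insert _ _))))
    simpa [hA2, hB2, PresentedGroup.of] using this
  have r5 : B₂ * A₂ * B₂⁻¹ * A₁ = 1 := by
    have := mk_rel_one (rels := gnRels n)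
      (Set.mem_insert_of_mem _ (Set.mem_insert_of_mem _ (Set.mem_insert_of_mem _
        (Set.mem_insert_of_mem _ (Set.mem_insert _ _)))))
    simpa [hA1, hA2, hB2, PresentedGroup.of] using this
  have r7 : B₁ * B₂ * A₂ ^ n = 1 := by
    have := mk_rel_one (rels := gnRels n)
      (Set.mem_insert_of_mem _ (Set.mem_insert_of_mem _ (Set.mem_insert_of_mem _
        (Set.mem_insert_of_mem _ (Set.mem_insert_of_mem _ (Set.mem_insert_of_mem _
          (Set.mem_insert _ _)))))))
    simpa [hA2, hB1, hB2, PresentedGroup.of] using this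
  -- consequences in G_n
  have hA2pow : A₂ ^ n = 1 := by rw [r2, one_mul] at r7; exact r7
  have hB1eq : B₁ = B₂⁻¹ := by rwa [mul_eq_one_iff_eq_inv] at r2
  have hcG : Commute A₂ B₂ := by
    have := r4
    rw [mul_inv_eq_one, mul_inv_eq_iff_eq_mul] at this
    exact this
  have hA1eq : A₁ = A₂⁻¹ := by
    have h5 : A₁ = B₂ * A₂⁻¹ * B₂⁻¹ := by
      have := r5
      rw [mul_eq_one_iff_inv_eq] at this
      rw [← this]; group
    rw [h5, (hcG.inv_left.symm).eq]; group
  -- homomorphism G_n → twoGen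
  have k1 : a⁻¹ * b⁻¹ * a * b = 1 := by
    have := commutatorElement_eq_one_iff_commute.2 hc2.inv_inv
    simpa [commutatorElement_def] using this
  have hg : ∀ r ∈ gnRels n,
      FreeGroup.lift (![a⁻¹, b⁻¹, a, b] : Fin 4 → PresentedGroup (twoGenRels n)) r = 1 := by
    have e0 : (![a⁻¹, b⁻¹, a, b] : Fin 4 → _) 0 = a⁻¹ := rfl
    have e1 : (![a⁻¹, b⁻¹, a, b] : Fin 4 → _) 1 = b⁻¹ := rfl
    have e2 : (![a⁻¹, b⁻¹, a, b] : Fin 4 → _) 2 = a := rfl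
    have e3 : (![a⁻¹, b⁻¹, a, b] : Fin 4 → _) 3 = b := rfl
    intro r hr
    simp only [gnRels, Set.mem_insert_iff, Set.mem_singleton_iff] at hr
    have hab := hc2.eq
    rcases hr with rfl | rfl | rfl | rfl | rfl | rfl | rfl | rfl <;>
      simp only [map_mul, map_inv, map_pow, FreeGroup.lift_apply_of, e0, e1, e2, e3]
    · rw [hcomm, mul_one]; exact k1
    · group
    · exact k1
    · exact hcomm
    · rw [← hab]; group
    · group
    · simp [hapow]
    · rw [pow_succ, hapow]; group
  -- homomorphism twoGen → G_n
  have hf : ∀ r ∈ twoGenRels n,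
      FreeGroup.lift (![A₂, B₂] : Fin 2 → PresentedGroup (gnRels n)) r = 1 := by
    have e0 : (![A₂, B₂] : Fin 2 → _) 0 = A₂ := rfl
    have e1 : (![A₂, B₂] : Fin 2 → _) 1 = B₂ := rfl
    intro r hr
    simp only [twoGenRels, Set.mem_insert_iff, Set.mem_singleton_iff] at hr
    rcases hr with rfl | rfl <;>
      simp only [map_mul, map_inv, map_pow, FreeGroup.lift_apply_of, e0, e1]
    · exact r4
    · exact hA2pow
  set φ : PresentedGroup (gnRels n) →* PresentedGroup (twoGenRels n) :=
    PresentedGroup.toGroup hg with hφ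
  set ψ : PresentedGroup (twoGenRels n) →* PresentedGroup (gnRels n) :=
    PresentedGroup.toGroup hf with hψ
  have hψa : ψ a = A₂ := PresentedGroup.toGroup.of hf
  have hψb : ψ b = B₂ := PresentedGroup.toGroup.of hf
  have h₁ : ψ.comp φ = MonoidHom.id _ := by
    refine PresentedGroup.ext fun x => ?_
    fin_cases x <;>
      simp only [MonoidHom.comp_apply, MonoidHom.id_apply, hφ, hψ,
        PresentedGroup.toGroup.of]
    · show ψ a⁻¹ = A₁
      rw [map_inv, hψa, hA1eq]
    · show ψ b⁻¹ = B₁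
      rw [map_inv, hψb, hB1eq]
    · exact hψa
    · exact hψb
  have h₂ : φ.comp ψ = MonoidHom.id _ := by
    refine PresentedGroup.ext fun x => ?_
    fin_cases x <;>
      simp only [MonoidHom.comp_apply, MonoidHom.id_apply, hφ, hψ,
        PresentedGroup.toGroup.of]
    · show φ A₂ = a
      exact PresentedGroup.toGroup.of hg
    · show φ B₂ = b
      exact PresentedGroup.toGroup.of hg
  exact ⟨MonoidHom.toMulEquiv φ ψ h₁ h₂⟩
end
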